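/- In a restricted Lie algebra (L, [p]) over a field of characteristic p > 0, if x is semisimple, then every element y of the p-subalgebra generated by x is semisimple. -/

import Mathlib

open scoped TensorProduct

/-- Iterated adjoint action: `adIter z n w = (ad z)^n w`. -/
def adIter {L : Type*} [LieRing L] (z : L) : ℕ → L → L
  | 0, w => w
  | n+1, w => ⁅z, adIter z n w⁆

/-- A `p`-semilinear map between `F`-vector spaces. -/
def IsPSemilinear (p : ℕ) (F : Type*) [Field F] {V W : Type*}
    [AddCommGroup V] [Module F V] [AddCommGroup W] [Module F W] (f : V → W) : Prop :=
  ∀ (a : F) (x y : V), f (a • x + y) = a ^ p • f x + f y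

/-- `pm` is a `p`-mapping on the Lie algebra `L` over `F`. -/
structure IsPMap (p : ℕ) (F : Type*) [Field F] (L : Type*) [LieRing L] [LieAlgebra F L]
    (pm : L → L) : Prop where
  ad_pow : ∀ a x : L, ⁅pm a, x⁆ = adIter a p x
  smul_pow : ∀ (c : F) (a : L), pm (c • a) = c ^ p • pm a
  add_pow : ∀ a b : L, ∃ s : Fin (p - 1) → L,
    adIter ((Polynomial.X : Polynomial F) ⊗ₜ[F] a + (1 : Polynomial F) ⊗ₜ[F] b) (p - 1)
        ((1 : Polynomial F) ⊗ₜ[F] a)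
      = (∑ j : Fin (p - 1), ((j : ℕ) + 1) •
          (((Polynomial.X : Polynomial F) ^ (j : ℕ)) ⊗ₜ[F] s j)) ∧
    pm (a + b) = pm a + pm b + ∑ j : Fin (p - 1), s j

/-- `H` is a `p`-subalgebra w.r.t. the map `pm`. -/
def IsPSubalgebra (F : Type*) [Field F] {L : Type*} [LieRing L] [LieAlgebra F L]
    (pm : L → L) (H : LieSubalgebra F L) : Prop :=
  ∀ x ∈ H, pm x ∈ H

/-- The `p`-subalgebra generated by a set `S`. -/
def pSpan (F : Type*) [Field F] {L : Type*} [LieRing L] [LieAlgebra F L]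
    (pm : L → L) (S : Set L) : LieSubalgebra F L :=
  sInf {H : LieSubalgebra F L | IsPSubalgebra F pm H ∧ S ⊆ H}

/-- An element `x` is semisimple if it lies in the `p`-subalgebra generated by `pm x`. -/
def IsSemisimpleElt (F : Type*) [Field F] {L : Type*} [LieRing L] [LieAlgebra F L]
    (pm : L → L) (x : L) : Prop :=
  x ∈ pSpan F pm {pm x}

/-- An element is `p`-nilpotent if some iterate of the `p`-map kills it. -/
def IsPNilpotentElt {L : Type*} (pm : L → L) [Zero L] (x : L) : Prop :=
  ∃ n : ℕ, pm^[n] x = 0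


section SemisimpleAux

lemma adIter_succ_eq_zero {L : Type*} [LieRing L] {z w : L} (h : ⁅z, w⁆ = 0) :
    ∀ n : ℕ, adIter z (n + 1) w = 0
  | 0 => h
  | n+1 => by rw [adIter, adIter_succ_eq_zero h n, lie_zero]

lemma span_image_span {F V W : Type*} [Field F] [AddCommGroup V] [Module F V]
    [AddCommGroup W] [Module F W] {σ : F →+* F} (φ : V →ₛₗ[σ] W) (S : Set V) :
    Submodule.span F (φ '' (Submodule.span F S : Set V)) = Submodule.span F (φ '' S) := by
  refine le_antisymm (Submodule.span_le.2 ?_) (Submodule.span_mono (Set.image_mono Submodule.subset_span))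
  rintro _ ⟨v, hv, rfl⟩
  induction hv using Submodule.span_induction with
  | mem v hv => exact Submodule.subset_span ⟨v, hv, rfl⟩
  | zero => simp
  | add a b _ _ ha hb => rw [map_add]; exact add_mem ha hb
  | smul c a _ ha => rw [map_smulₛₗ]; exact Submodule.smul_mem _ _ ha

open Module in
lemma core_semilinear {F V : Type*} [Field F] [AddCommGroup V] [Module F V]
    [FiniteDimensional F V] {σ : F →+* F} (φ : V →ₛₗ[σ] V)
    (hφ : Submodule.span F (Set.range φ) = ⊤)
    (B : Submodule F V) (hB : ∀ v ∈ B, φ v ∈ B) :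
    Submodule.span F (φ '' B) = B := by
  classical
  -- basis of B, as a family in V
  let k := finrank F B
  let bB : Basis (Fin k) F B := finBasis F B
  let vB : Fin k → V := fun i => (bB i : V)
  have hvBli : LinearIndependent F vB := by
    exact bB.linearIndependent.map' B.subtype B.ker_subtype
  have hvBspan : Submodule.span F (Set.range vB) = B := by
    have : Set.range vB = B.subtype '' Set.range bB := by
      ext w; simp [vB, Set.range_comp]
    rw [this, ← Submodule.map_span, bB.span_eq, Submodule.map_top, Submodule.range_subtype]
  -- extend to a basis of V
  have hsetli : LinearIndepOn F id (Set.range vB) := (linearIndepOn_id_range_iff hvBli.injective).mpr hvBli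
  let bV : Basis (hsetli.extend (Set.subset_univ _)) F V := Module.Basis.extend hsetli
  haveI : Fintype (hsetli.extend (Set.subset_univ _)) := FiniteDimensional.fintypeBasisIndex bV
  -- φ ∘ bV spans V
  have hspan2 : Submodule.span F (Set.range (fun i => φ (bV i))) = ⊤ := by
    have h1 : Set.range (fun i => φ (bV i)) = φ '' (Set.range bV) :=
      Set.range_comp φ bV
    rw [h1, ← span_image_span, bV.span_eq]
    rw [show ((⊤ : Submodule F V) : Set V) = Set.univ from rfl, Set.image_univ, hφ]
  have hcard : Fintype.card (hsetli.extend (Set.subset_univ _)) = finrank F V :=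
    (finrank_eq_card_basis bV).symm
  have hli2 : LinearIndependent F (fun i => φ (bV i)) :=
    linearIndependent_of_top_le_span_of_card_eq_finrank hspan2.ge hcard
  -- the subfamily φ ∘ vB is independent
  have hinj : Function.Injective vB := hvBli.injective
  let e : Fin k → hsetli.extend (Set.subset_univ _) := fun i =>
    ⟨vB i, hsetli.subset_extend _ ⟨i, rfl⟩⟩
  have he : Function.Injective e := fun i j h => hinj (Subtype.mk_eq_mk.mp h)
  have hbVe : ∀ i, bV (e i) = vB i := fun i => Basis.extend_apply_self hsetli _
  have hli3 : LinearIndependent F (fun i => φ (vB i)) := by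
    have h2 := hli2.comp e he
    have h3 : ((fun i => φ (bV i)) ∘ e) = fun i => φ (vB i) :=
      funext fun i => by simp only [Function.comp_apply, hbVe]
    rwa [h3] at h2
  -- span (φ '' B) = span of range (φ ∘ vB)
  have hrange : Set.range (fun i => φ (vB i)) = φ '' Set.range vB := Set.range_comp φ vB
  have hkey : Submodule.span F (φ '' B) = Submodule.span F (Set.range (fun i => φ (vB i))) := by
    rw [hrange, ← hvBspan, span_image_span]
  have hle : Submodule.span F (φ '' B) ≤ B := Submodule.span_le.2 (by
    rintro _ ⟨v, hv, rfl⟩; exact hB v hv)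
  refine Submodule.eq_of_le_of_finrank_le hle ?_
  rw [hkey, finrank_span_eq_card hli3]
  simp [k]

variable {p : ℕ} [Fact p.Prime] {F : Type*} [Field F] [CharP F p]
  {L : Type*} [LieRing L] [LieAlgebra F L] {pm : L → L}

set_option linter.unusedSectionVars false

lemma pm_zero (hpm : IsPMap p F L pm) : pm 0 = 0 := by
  have h := hpm.smul_pow 0 0
  rw [zero_smul, zero_pow (Fact.out (p := p.Prime)).ne_zero, zero_smul] at h
  exact h

lemma pm_bracket_zero (hpm : IsPMap p F L pm) {a b : L} (h : ⁅a, b⁆ = 0) : ⁅pm a, b⁆ = 0 := by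
  rw [hpm.ad_pow]
  have hp1 : p - 1 + 1 = p := Nat.succ_pred_eq_of_pos (Fact.out (p := p.Prime)).pos
  rw [← hp1]
  exact adIter_succ_eq_zero h _

lemma pm_add (hpm : IsPMap p F L pm) {a b : L} (h : ⁅a, b⁆ = 0) : pm (a + b) = pm a + pm b := by
  classical
  obtain ⟨s, h1, h2⟩ := hpm.add_pow a b
  have hp : p.Prime := Fact.out
  have hp1 : p - 1 ≠ 0 := by have := hp.two_le; omega
  -- the bracket in the base-changed algebra vanishes
  have hz : ⁅((Polynomial.X : Polynomial F) ⊗ₜ[F] a + (1 : Polynomial F) ⊗ₜ[F] b),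
      ((1 : Polynomial F) ⊗ₜ[F] a)⁆ = 0 := by
    refine Eq.trans (add_lie (M := Polynomial F ⊗[F] L) _ _ _) ?_
    rw [LieAlgebra.ExtendScalars.bracket_tmul, LieAlgebra.ExtendScalars.bracket_tmul,
      lie_self, show ⁅b, a⁆ = 0 by rw [← lie_skew, h, neg_zero]]
    simp
  have hzero : adIter ((Polynomial.X : Polynomial F) ⊗ₜ[F] a + (1 : Polynomial F) ⊗ₜ[F] b) (p - 1)
      ((1 : Polynomial F) ⊗ₜ[F] a) = 0 := by
    obtain ⟨m, hm⟩ : ∃ m, p - 1 = m + 1 := ⟨p - 2, by have := hp.two_le; omega⟩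
    rw [hm]; exact adIter_succ_eq_zero hz m
  rw [hzero] at h1
  -- extract coefficients
  have hs : ∀ j : Fin (p - 1), s j = 0 := by
    intro k
    let ψ : Polynomial F ⊗[F] L →ₗ[F] L :=
      (TensorProduct.lid F L).toLinearMap ∘ₗ
        TensorProduct.map (Polynomial.lcoeff F (k : ℕ)) LinearMap.id
    have hψ := congrArg ψ h1.symm
    rw [map_sum, map_zero] at hψ
    have hterm : ∀ j : Fin (p - 1),
        ψ (((j : ℕ) + 1) • (((Polynomial.X : Polynomial F) ^ (j : ℕ)) ⊗ₜ[F] s j))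
          = if j = k then ((k : ℕ) + 1) • s k else 0 := by
      intro j
      rw [map_nsmul]
      have : ψ (((Polynomial.X : Polynomial F) ^ (j : ℕ)) ⊗ₜ[F] s j)
          = (Polynomial.X ^ (j : ℕ) : Polynomial F).coeff (k : ℕ) • s j := by
        simp [ψ, TensorProduct.map_tmul, Polynomial.lcoeff_apply]
      rw [this, Polynomial.coeff_X_pow]
      by_cases hjk : j = k
      · subst hjk; simp
      · have hne : ((j : ℕ) : ℕ) ≠ (k : ℕ) := fun hc => hjk (Fin.ext hc)
        rw [if_neg (Ne.symm hne), zero_smul, smul_zero, if_neg hjk]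
    rw [Finset.sum_congr rfl (fun j _ => hterm j), Finset.sum_ite_eq' Finset.univ k
      (fun _ => ((k : ℕ) + 1) • s k)] at hψ
    simp only [Finset.mem_univ, if_true] at hψ
    have hcast : (((k : ℕ) + 1 : ℕ) : F) • s k = 0 := by
      rw [Nat.cast_smul_eq_nsmul]; exact hψ
    have hne : (((k : ℕ) + 1 : ℕ) : F) ≠ 0 := by
      rw [Ne, CharP.cast_eq_zero_iff F p]
      intro hdvd
      have hk := k.2
      have := Nat.le_of_dvd (Nat.succ_pos _) hdvd
      omega
    exact (smul_eq_zero.mp hcast).resolve_left hne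
  rw [h2, Finset.sum_eq_zero (fun j _ => hs j), add_zero]

lemma comm_span (S : Set L) (hS : ∀ a ∈ S, ∀ b ∈ S, ⁅a, b⁆ = 0) :
    ∀ a ∈ Submodule.span F S, ∀ b ∈ Submodule.span F S, ⁅a, b⁆ = 0 := by
  intro a ha b hb
  induction ha, hb using Submodule.span_induction₂ with
  | mem_mem u v hu hv => exact hS u hu v hv
  | zero_left v hv => exact zero_lie v
  | zero_right u hu => exact lie_zero u
  | add_left u v w hu hv hw h1 h2 => rw [add_lie, h1, h2, add_zero]
  | add_right u v w hu hv hw h1 h2 => rw [lie_add, h1, h2, add_zero]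
  | smul_left r u v hu hv h1 => rw [smul_lie, h1, smul_zero]
  | smul_right r u v hu hv h1 => rw [lie_smul, h1, smul_zero]

lemma pm_span_image (hpm : IsPMap p F L pm) (S : Set L)
    (hS : ∀ a ∈ S, ∀ b ∈ S, ⁅a, b⁆ = 0) :
    ∀ a ∈ Submodule.span F S, pm a ∈ Submodule.span F (pm '' S) := by
  intro a ha
  induction ha using Submodule.span_induction with
  | mem u hu => exact Submodule.subset_span ⟨u, hu, rfl⟩
  | zero => rw [pm_zero hpm]; exact Submodule.zero_mem _
  | add u v hu hv h1 h2 =>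
      rw [pm_add hpm (comm_span S hS u hu v hv)]; exact Submodule.add_mem _ h1 h2
  | smul c u hu h1 => rw [hpm.smul_pow]; exact Submodule.smul_mem _ _ h1

/-- membership criterion for `pSpan`. -/
lemma mem_pSpan_iff {z : L} {S : Set L} :
    z ∈ pSpan F pm S ↔ ∀ H : LieSubalgebra F L, IsPSubalgebra F pm H → S ⊆ H → z ∈ H := by
  constructor
  · intro hz H h1 h2
    have : pSpan F pm S ≤ H := sInf_le ⟨h1, h2⟩
    exact this hz
  · intro hz
    rw [pSpan, ← SetLike.mem_coe, LieSubalgebra.coe_sInf]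
    simp only [Set.mem_iInter, SetLike.mem_coe, Set.mem_setOf_eq]
    rintro H ⟨h1, h2⟩
    exact hz H h1 h2

lemma subset_pSpan {S : Set L} : S ⊆ pSpan F pm S := fun _z hz =>
  mem_pSpan_iff.mpr fun _H _ h2 => h2 hz

lemma pSpan_isP {S : Set L} : IsPSubalgebra F pm (pSpan F pm S) := by
  intro z hz
  rw [mem_pSpan_iff] at hz ⊢
  exact fun H h1 h2 => h1 z (hz H h1 h2)

/-- build the abelian Lie subalgebra on the span of a commuting set -/
def abelianSub (S : Set L) (hS : ∀ a ∈ S, ∀ b ∈ S, ⁅a, b⁆ = 0) : LieSubalgebra F L where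
  toSubmodule := Submodule.span F S
  lie_mem' {z w} hz hw := by
    have h : ⁅z, w⁆ = 0 := comm_span (F := F) S hS z hz w hw
    show ⁅z, w⁆ ∈ Submodule.span F S
    rw [h]; exact Submodule.zero_mem _

lemma pm_iter_comm (hpm : IsPMap p F L pm) (x : L) :
    ∀ i j, ⁅pm^[i] x, pm^[j] x⁆ = 0 := by
  have hb0 : ∀ j, ⁅pm^[j] x, x⁆ = 0 := by
    intro j
    induction j with
    | zero => exact lie_self x
    | succ j ih =>
        rw [Function.iterate_succ_apply']
        exact pm_bracket_zero hpm ih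
  intro i j
  induction j generalizing i with
  | zero => exact hb0 i
  | succ j ih =>
      rw [Function.iterate_succ_apply']
      have h1 : ⁅pm^[j] x, pm^[i] x⁆ = 0 := by rw [← lie_skew, ih i, neg_zero]
      have h2 := pm_bracket_zero hpm h1
      rw [← lie_skew, h2, neg_zero]

lemma fd_span_iterates (hpm : IsPMap p F L pm) (x : L) (n : ℕ)
    (hx : x ∈ Submodule.span F (Set.range fun i : Fin n => pm^[(i : ℕ) + 1] x)) :
    FiniteDimensional F (Submodule.span F (Set.range fun i : ℕ => pm^[i] x)) := by
  induction n with
  | zero =>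
      rw [Set.range_eq_empty, Submodule.span_empty, Submodule.mem_bot] at hx
      have hall : ∀ i, pm^[i] x = 0 := by
        intro i
        induction i with
        | zero => exact hx
        | succ i ih => rw [Function.iterate_succ_apply', ih, pm_zero hpm]
      have : Submodule.span F (Set.range fun i : ℕ => pm^[i] x) = ⊥ :=
        Submodule.span_eq_bot.2 (by rintro _ ⟨i, rfl⟩; exact hall i)
      rw [this]; infer_instance
  | succ n IH =>
      rw [Submodule.mem_span_range_iff_exists_fun] at hx
      obtain ⟨c, hc⟩ := hx
      by_cases hcl : c (Fin.last n) = 0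
      · apply IH
        rw [Submodule.mem_span_range_iff_exists_fun]
        rw [Fin.sum_univ_castSucc, Fin.val_last, hcl, zero_smul, add_zero] at hc
        refine ⟨fun i => c i.castSucc, ?_⟩
        simpa using hc
      · set W := Submodule.span F (Set.range fun i : Fin (n + 1) => pm^[(i : ℕ)] x) with hW
        have hxW : x ∈ W := Submodule.subset_span ⟨0, rfl⟩
        have hviW : ∀ i : ℕ, i ≤ n → pm^[i] x ∈ W := fun i h =>
          Submodule.subset_span ⟨⟨i, by omega⟩, rfl⟩
        have hlast : pm^[n + 1] x ∈ W := by
          rw [Fin.sum_univ_castSucc, Fin.val_last] at hc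
          simp only [Fin.coe_castSucc] at hc
          have h2 : c (Fin.last n) • pm^[n + 1] x
              = x - ∑ i : Fin n, c i.castSucc • pm^[(i : ℕ) + 1] x :=
            eq_sub_of_add_eq' hc
          have h3 : pm^[n + 1] x = (c (Fin.last n))⁻¹ •
              (x - ∑ i : Fin n, c i.castSucc • pm^[(i : ℕ) + 1] x) := by
            rw [← h2, inv_smul_smul₀ hcl]
          rw [h3]
          exact W.smul_mem _ (W.sub_mem hxW (Submodule.sum_mem _ fun i _ =>
            W.smul_mem _ (hviW ((i : ℕ) + 1) (by omega))))
        have hWpm : ∀ a ∈ W, pm a ∈ W := by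
          intro a ha
          have hcommW : ∀ u ∈ (Set.range fun i : Fin (n + 1) => pm^[(i : ℕ)] x),
              ∀ v ∈ (Set.range fun i : Fin (n + 1) => pm^[(i : ℕ)] x), ⁅u, v⁆ = 0 := by
            rintro _ ⟨i, rfl⟩ _ ⟨j, rfl⟩; exact pm_iter_comm hpm x _ _
          have himg := pm_span_image hpm _ hcommW a ha
          refine Submodule.span_le.2 ?_ himg
          rintro _ ⟨_, ⟨i, rfl⟩, rfl⟩
          show pm (pm^[(i : ℕ)] x) ∈ W
          rw [show pm (pm^[(i : ℕ)] x) = pm^[(i : ℕ) + 1] x from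
            (Function.iterate_succ_apply' pm _ x).symm]
          rcases lt_or_eq_of_le (Nat.lt_succ_iff.mp i.2) with h | h
          · exact hviW _ (by omega)
          · rw [h]; exact hlast
        have hall : ∀ k, pm^[k] x ∈ W := by
          intro k
          induction k with
          | zero => exact hxW
          | succ k ih => rw [Function.iterate_succ_apply']; exact hWpm _ ih
        have hle : Submodule.span F (Set.range fun i : ℕ => pm^[i] x) ≤ W :=
          Submodule.span_le.2 (by rintro _ ⟨k, rfl⟩; exact hall k)
        haveI : FiniteDimensional F W :=
          FiniteDimensional.span_of_finite F (Set.finite_range _)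
        exact Submodule.finiteDimensional_of_le hle

end SemisimpleAux

/-- If `x` is a semisimple element of a restricted Lie algebra, then every
element of the `p`-subalgebra generated by `x` is semisimple. -/
theorem isSemisimpleElt_of_mem_pSpan (p : ℕ) [Fact p.Prime]
    (F : Type*) [Field F] [CharP F p]
    {L : Type*} [LieRing L] [LieAlgebra F L]
    (pm : L → L) (hpm : IsPMap p F L pm)
    {x : L} (hx : IsSemisimpleElt F pm x) :
    ∀ y ∈ pSpan F pm {x}, IsSemisimpleElt F pm y := by
  classical
  intro y hy
  have hvs : ∀ (z : L) (i : ℕ), pm^[i + 1] z = pm (pm^[i] z) := fun z i =>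
    Function.iterate_succ_apply' pm i z
  set SA : Set L := Set.range fun i : ℕ => pm^[i] x with hSA
  have hSAcomm : ∀ a ∈ SA, ∀ b ∈ SA, ⁅a, b⁆ = 0 := by
    rintro _ ⟨i, rfl⟩ _ ⟨j, rfl⟩; exact pm_iter_comm hpm x i j
  set A : Submodule F L := Submodule.span F SA with hA
  have hApm : ∀ a ∈ A, pm a ∈ A := by
    intro a ha
    have h := pm_span_image hpm SA hSAcomm a ha
    refine Submodule.span_le.2 ?_ h
    rintro _ ⟨_, ⟨i, rfl⟩, rfl⟩
    exact Submodule.subset_span ⟨i + 1, hvs x i⟩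
  -- y lies in A
  have hyA : y ∈ A := by
    have hK : pSpan F pm {x} ≤ abelianSub (F := F) SA hSAcomm := by
      apply sInf_le
      refine ⟨fun z hz => hApm z hz, ?_⟩
      intro z hz
      rw [Set.mem_singleton_iff] at hz; subst hz
      exact Submodule.subset_span ⟨0, rfl⟩
    exact hK hy
  -- x lies in the span of the shifted iterates
  set SA' : Set L := Set.range fun i : ℕ => pm^[i + 1] x with hSA'
  have hSA'comm : ∀ a ∈ SA', ∀ b ∈ SA', ⁅a, b⁆ = 0 := by
    rintro _ ⟨i, rfl⟩ _ ⟨j, rfl⟩; exact pm_iter_comm hpm x _ _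
  have hxA' : x ∈ Submodule.span F SA' := by
    have hK' : pSpan F pm {pm x} ≤ abelianSub (F := F) SA' hSA'comm := by
      apply sInf_le
      constructor
      · intro z hz
        have h := pm_span_image hpm SA' hSA'comm z hz
        refine Submodule.span_le.2 ?_ h
        rintro _ ⟨_, ⟨i, rfl⟩, rfl⟩
        exact Submodule.subset_span ⟨i + 1, hvs x (i + 1)⟩
      · intro z hz
        rw [Set.mem_singleton_iff] at hz; subst hz
        exact Submodule.subset_span ⟨0, (Function.iterate_one pm).symm ▸ rfl⟩
    exact hK' hx
  -- finite dimensionality of A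
  haveI hFD : FiniteDimensional F A := by
    rw [Finsupp.mem_span_range_iff_exists_finsupp] at hxA'
    obtain ⟨c, hc⟩ := hxA'
    apply fd_span_iterates hpm x (c.support.sup id + 1)
    have hmem : (c.sum fun i a => a • pm^[i + 1] x) ∈
        Submodule.span F (Set.range fun i : Fin (c.support.sup id + 1) => pm^[(i : ℕ) + 1] x) := by
      rw [Finsupp.sum]
      refine Submodule.sum_mem _ fun i hi => Submodule.smul_mem _ _ (Submodule.subset_span ?_)
      have h5 : id i ≤ c.support.sup id := Finset.le_sup hi
      exact ⟨⟨i, by simpa using Nat.lt_succ_of_le h5⟩, rfl⟩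
    rwa [hc] at hmem
  -- the semilinear map φ on A
  let φ : A →ₛₗ[frobenius F p] A :=
    { toFun := fun a => ⟨pm a, hApm a a.2⟩
      map_add' := fun a b => Subtype.ext (pm_add hpm (comm_span SA hSAcomm _ a.2 _ b.2))
      map_smul' := fun c a => Subtype.ext (by
        show pm ((c • a : A) : L) = (frobenius F p c) • (pm (a : L))
        rw [show ((c • a : A) : L) = c • (a : L) from rfl, hpm.smul_pow]
        rfl) }
  have hφval : ∀ a : A, (φ a : L) = pm a := fun a => rfl
  -- the image of φ spans A
  have hφtop : Submodule.span F (Set.range φ) = ⊤ := by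
    apply Submodule.map_injective_of_injective A.injective_subtype
    rw [Submodule.map_span, Submodule.map_top, Submodule.range_subtype]
    have himg : A.subtype '' Set.range ⇑φ = pm '' (A : Set L) := by
      ext w
      constructor
      · rintro ⟨_, ⟨a, rfl⟩, rfl⟩; exact ⟨a, a.2, rfl⟩
      · rintro ⟨u, hu, rfl⟩; exact ⟨φ ⟨u, hu⟩, ⟨⟨u, hu⟩, rfl⟩, rfl⟩
    rw [himg]
    apply le_antisymm
    · refine Submodule.span_le.2 ?_
      rintro _ ⟨u, hu, rfl⟩
      exact hApm u hu
    · rw [hA]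
      refine Submodule.span_le.2 ?_
      rintro _ ⟨i, rfl⟩
      match i with
      | 0 =>
        show x ∈ Submodule.span F (pm '' (A : Set L))
        refine Submodule.span_mono ?_ hxA'
        rintro _ ⟨i, rfl⟩
        exact ⟨pm^[i] x, Submodule.subset_span ⟨i, rfl⟩, (hvs x i).symm⟩
      | i + 1 =>
        show pm^[i+1] x ∈ Submodule.span F (pm '' (A : Set L))
        refine Submodule.subset_span ⟨pm^[i] x, Submodule.subset_span ⟨i, rfl⟩, (hvs x i).symm⟩
  -- the submodule B generated by the iterates of y inside A
  set yA : A := ⟨y, hyA⟩ with hyAdef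
  set B : Submodule F A := Submodule.span F (Set.range fun i : ℕ => (⇑φ)^[i] yA) with hB
  have hBst : ∀ v ∈ B, φ v ∈ B := by
    intro v hv
    induction hv using Submodule.span_induction with
    | mem u hu =>
        obtain ⟨i, rfl⟩ := hu
        exact Submodule.subset_span ⟨i + 1, Function.iterate_succ_apply' ⇑φ i yA⟩
    | zero => rw [map_zero]; exact B.zero_mem
    | add u v _ _ h1 h2 => rw [map_add]; exact B.add_mem h1 h2
    | smul c u _ h1 => rw [map_smulₛₗ]; exact B.smul_mem _ h1
  have hcore := core_semilinear φ hφtop B hBst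
  have hyB : yA ∈ Submodule.span F (⇑φ '' B) := by
    rw [hcore]; exact Submodule.subset_span ⟨0, rfl⟩
  -- push everything down to L
  have hiter : ∀ i : ℕ, (((⇑φ)^[i] yA : A) : L) = pm^[i] y := by
    intro i
    induction i with
    | zero => rfl
    | succ i ih =>
        rw [Function.iterate_succ_apply' ⇑φ i yA, hvs y i, ← ih]
        rfl
  have hyL : y ∈ Submodule.span F (pm '' (Submodule.map A.subtype B : Set L)) := by
    have h1 : y ∈ Submodule.map A.subtype (Submodule.span F (⇑φ '' B)) :=
      ⟨yA, hyB, rfl⟩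
    rw [Submodule.map_span] at h1
    have h2 : A.subtype '' (⇑φ '' B) = pm '' (Submodule.map A.subtype B : Set L) := by
      ext w
      constructor
      · rintro ⟨_, ⟨b, hb, rfl⟩, rfl⟩
        exact ⟨b, ⟨b, hb, rfl⟩, rfl⟩
      · rintro ⟨_, ⟨b, hb, rfl⟩, rfl⟩
        exact ⟨φ b, ⟨b, hb, rfl⟩, rfl⟩
    rwa [h2] at h1
  -- identify map A.subtype B with the span of the iterates of y
  have hBL : (Submodule.map A.subtype B : Submodule F L)
      = Submodule.span F (Set.range fun i : ℕ => pm^[i] y) := by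
    rw [hB, Submodule.map_span]
    congr 1
    ext w
    constructor
    · rintro ⟨_, ⟨i, rfl⟩, rfl⟩; exact ⟨i, (hiter i).symm⟩
    · rintro ⟨i, rfl⟩; exact ⟨(⇑φ)^[i] yA, ⟨i, rfl⟩, hiter i⟩
  -- conclude
  have hyiter_comm : ∀ a ∈ (Set.range fun i : ℕ => pm^[i] y),
      ∀ b ∈ (Set.range fun i : ℕ => pm^[i] y), ⁅a, b⁆ = 0 := by
    have hmem : ∀ i : ℕ, pm^[i] y ∈ A := by
      intro i
      induction i with
      | zero => exact hyA
      | succ i ih => rw [hvs]; exact hApm _ ih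
    rintro _ ⟨i, rfl⟩ _ ⟨j, rfl⟩
    exact comm_span SA hSAcomm _ (hmem i) _ (hmem j)
  have hfinal : ∀ i : ℕ, pm^[i + 1] y ∈ pSpan F pm {pm y} := by
    intro i
    induction i with
    | zero => rw [Function.iterate_one]; exact subset_pSpan rfl
    | succ i ih => rw [hvs]; exact pSpan_isP _ ih
  show y ∈ pSpan F pm {pm y}
  have hch : Submodule.span F (pm '' (Submodule.map A.subtype B : Set L))
      ≤ (pSpan F pm {pm y} : Submodule F L) := by
    refine Submodule.span_le.2 ?_
    rintro _ ⟨b, hb, rfl⟩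
    rw [hBL] at hb
    have h3 := pm_span_image hpm _ hyiter_comm b hb
    have h4 : Submodule.span F (pm '' Set.range fun i : ℕ => pm^[i] y)
        ≤ (pSpan F pm {pm y} : Submodule F L) := by
      refine Submodule.span_le.2 ?_
      rintro _ ⟨_, ⟨i, rfl⟩, rfl⟩
      rw [show pm (pm^[i] y) = pm^[i + 1] y from (hvs y i).symm]
      exact hfinal i
    exact h4 h3
  exact hch hyL
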